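/- Fix c ∈ [0,1] with k(c) > 0. The function u(·; c) is continuously differentiable on all of ℝ (value matching and smooth fit hold at β*(c): u(β*(c); c) = 0 and u′(β*(c); c) = 0), is convex on ℝ, and is nonnegative on ℝ. -/

import Mathlib

open MeasureTheory Real Set Filter Topology


/-- The (positive multiple of the) strictly decreasing fundamental solution `φ_λ` of the
Ornstein–Uhlenbeck equation `(1/2)σ² f'' + θ(μ - x) f' = λ f`, written as the integral
`φ(x) = ∫₀^∞ t^(λ/θ - 1) exp(-t²/2 - a t (x - μ)) dt` with `a = √(2θ)/σ`. -/
noncomputable def OUphi (lam th mu sig : ℝ) (x : ℝ) : ℝ :=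
  ∫ t in Set.Ioi (0:ℝ),
    t ^ (lam / th - 1) * Real.exp (-t ^ 2 / 2 - Real.sqrt (2 * th) / sig * t * (x - mu))

/-- `k(c) = λ + θ + λ Φ'(c)`. -/
noncomputable def kfun (lam th : ℝ) (Phi : ℝ → ℝ) (c : ℝ) : ℝ :=
  lam + th + lam * deriv Phi c

/-- `G(x; c) = μ(k(c) - θ)/λ + k(c)(x - μ)/(λ + θ)`. -/
noncomputable def Gfun (lam th mu : ℝ) (Phi : ℝ → ℝ) (x c : ℝ) : ℝ :=
  mu * (kfun lam th Phi c - th) / lam + kfun lam th Phi c * (x - mu) / (lam + th)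

/-- `x₀(c) = -θμΦ'(c)/k(c)`. -/
noncomputable def x0fun (lam th mu : ℝ) (Phi : ℝ → ℝ) (c : ℝ) : ℝ :=
  -(th * mu * deriv Phi c) / kfun lam th Phi c

/-- The smooth-fit function `H(x;c) = (k(c)/(λ+θ)) φ(x) - G(x;c) φ'(x)`. -/
noncomputable def Hfun (lam th mu sig : ℝ) (Phi : ℝ → ℝ) (x c : ℝ) : ℝ :=
  kfun lam th Phi c / (lam + th) * OUphi lam th mu sig x
    - Gfun lam th mu Phi x c * deriv (OUphi lam th mu sig) x

/-- The candidate value function of the optimal stopping problem: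
`u(x;c) = G(x;c) - (G(β;c)/φ(β)) φ(x)` for `x > β` and `u(x;c) = 0` for `x ≤ β`. -/
noncomputable def ufun (lam th mu sig : ℝ) (Phi : ℝ → ℝ) (b : ℝ) (x c : ℝ) : ℝ :=
  if b < x then
    Gfun lam th mu Phi x c
      - Gfun lam th mu Phi b c / OUphi lam th mu sig b * OUphi lam th mu sig x
  else 0

noncomputable def phiInt (p a m x t : ℝ) : ℝ :=
  t ^ p * Real.exp (-t ^ 2 / 2 - a * t * (x - m))

lemma phiInt_pos (p a m x : ℝ) {t : ℝ} (ht : 0 < t) : 0 < phiInt p a m x t :=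
  mul_pos (Real.rpow_pos_of_pos ht p) (Real.exp_pos _)

lemma phiInt_contOn (p a m x : ℝ) : ContinuousOn (fun t => phiInt p a m x t) (Ioi 0) := by
  apply ContinuousOn.mul
  · exact fun t ht => (Real.continuousAt_rpow_const t p (Or.inl (ne_of_gt ht))).continuousWithinAt
  · apply Continuous.continuousOn
    fun_prop

lemma bound_key {q a m x t R : ℝ} (ht : 0 < t) (hR : |a * (x - m)| ≤ R) :
    phiInt q a m x t ≤ Real.exp ((1 + R) ^ 2 / 2) * (t ^ q * Real.exp (-t)) := by
  have h3 : -(a * (x - m)) ≤ R := (neg_le_abs _).trans hR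
  have h2 : -(a * t * (x - m)) ≤ R * t := by
    calc -(a * t * (x - m)) = (-(a * (x - m))) * t := by ring
    _ ≤ R * t := mul_le_mul_of_nonneg_right h3 ht.le
  have h1 : -t ^ 2 / 2 - a * t * (x - m) ≤ (1 + R) ^ 2 / 2 + -t := by
    nlinarith [sq_nonneg (t - (1 + R))]
  unfold phiInt
  calc t ^ q * Real.exp (-t ^ 2 / 2 - a * t * (x - m))
      ≤ t ^ q * Real.exp ((1 + R) ^ 2 / 2 + -t) :=
        mul_le_mul_of_nonneg_left (Real.exp_le_exp.2 h1) (Real.rpow_nonneg ht.le q)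
    _ = Real.exp ((1 + R) ^ 2 / 2) * (t ^ q * Real.exp (-t)) := by
        rw [Real.exp_add]; ring

lemma gammaAux (q : ℝ) (hq : -1 < q) (c : ℝ) :
    IntegrableOn (fun t : ℝ => c * (t ^ q * Real.exp (-t))) (Ioi 0) := by
  have h := Real.GammaIntegral_convergent (show 0 < q + 1 by linarith)
  have h2 : IntegrableOn (fun t : ℝ => t ^ q * Real.exp (-t)) (Ioi 0) := by
    simpa [add_sub_cancel_right, mul_comm] using h
  exact h2.const_mul c

lemma phiInt_integrableOn (p a m x : ℝ) (hp : -1 < p) :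
    IntegrableOn (fun t => phiInt p a m x t) (Ioi 0) := by
  refine Integrable.mono' (gammaAux p hp (Real.exp ((1 + |a * (x - m)|) ^ 2 / 2)))
    ((phiInt_contOn p a m x).aestronglyMeasurable measurableSet_Ioi) ?_
  filter_upwards [ae_restrict_mem measurableSet_Ioi] with t ht
  rw [Real.norm_eq_abs, abs_of_pos (phiInt_pos p a m x ht)]
  exact bound_key ht le_rfl

noncomputable def phiF (p a m x : ℝ) : ℝ := ∫ t in Ioi (0:ℝ), phiInt p a m x t
noncomputable def phiD (p a m x : ℝ) : ℝ := ∫ t in Ioi (0:ℝ), -(a * t) * phiInt p a m x t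

lemma phiF_pos (p a m x : ℝ) (hp : -1 < p) : 0 < phiF p a m x := by
  rw [phiF, setIntegral_pos_iff_support_of_nonneg_ae ?h1 (phiInt_integrableOn p a m x hp)]
  · have hsub : Ioi (0:ℝ) ⊆ (Function.support fun t => phiInt p a m x t) ∩ Ioi 0 :=
      fun t ht => ⟨(phiInt_pos p a m x ht).ne', ht⟩
    refine lt_of_lt_of_le ?_ (measure_mono hsub)
    rw [Real.volume_Ioi]
    simp
  case h1 =>
    filter_upwards [ae_restrict_mem measurableSet_Ioi] with t ht
    exact (phiInt_pos p a m x ht).le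

lemma ball_bound (a m x₀ : ℝ) : ∀ x ∈ Metric.ball x₀ 1,
    |a * (x - m)| ≤ |a| * (|x₀ - m| + 1) := by
  intro x hx
  rw [abs_mul]
  have h1 : |x - m| ≤ |x₀ - m| + 1 := by
    have h2 : |x - x₀| < 1 := by rw [← Real.dist_eq]; exact Metric.mem_ball.1 hx
    calc |x - m| = |(x - x₀) + (x₀ - m)| := by ring_nf
      _ ≤ |x - x₀| + |x₀ - m| := abs_add_le _ _
      _ ≤ |x₀ - m| + 1 := by linarith
  exact mul_le_mul_of_nonneg_left h1 (abs_nonneg a)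

lemma deriv_norm_bound (p a m x₀ : ℝ) {x t : ℝ} (ht : t ∈ Ioi (0:ℝ))
    (hx : x ∈ Metric.ball x₀ 1) :
    ‖-(a * t) * phiInt p a m x t‖ ≤
      (|a| * Real.exp ((1 + |a| * (|x₀ - m| + 1)) ^ 2 / 2)) * (t ^ (p+1) * Real.exp (-t)) := by
  have ht' : (0:ℝ) < t := ht
  have ht1 : t * phiInt p a m x t = phiInt (p+1) a m x t := by
    unfold phiInt; rw [Real.rpow_add_one (ne_of_gt ht')]; ring
  calc ‖-(a * t) * phiInt p a m x t‖ = |a| * (t * phiInt p a m x t) := by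
        rw [Real.norm_eq_abs, abs_mul, abs_neg, abs_mul, abs_of_pos ht',
          abs_of_pos (phiInt_pos p a m x ht')]
        ring
    _ = |a| * phiInt (p+1) a m x t := by rw [ht1]
    _ ≤ |a| * (Real.exp ((1 + |a| * (|x₀ - m| + 1)) ^ 2 / 2) * (t ^ (p+1) * Real.exp (-t))) :=
        mul_le_mul_of_nonneg_left (bound_key ht' (ball_bound a m x₀ x hx)) (abs_nonneg a)
    _ = _ := by ring

lemma phiD_meas (p a m x : ℝ) :
    AEStronglyMeasurable (fun t => -(a * t) * phiInt p a m x t)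
      (volume.restrict (Ioi (0:ℝ))) := by
  apply ContinuousOn.aestronglyMeasurable _ measurableSet_Ioi
  exact ContinuousOn.mul (Continuous.continuousOn (by fun_prop)) (phiInt_contOn p a m x)

lemma phiF_hasDerivAt (p a m : ℝ) (hp : -1 < p) (x₀ : ℝ) :
    HasDerivAt (fun x => phiF p a m x) (phiD p a m x₀) x₀ := by
  have key := hasDerivAt_integral_of_dominated_loc_of_deriv_le
      (F := fun x t => phiInt p a m x t)
      (F' := fun x t => -(a * t) * phiInt p a m x t)
      (bound := fun t => (|a| * Real.exp ((1 + |a| * (|x₀ - m| + 1)) ^ 2 / 2))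
        * (t ^ (p+1) * Real.exp (-t)))
      (μ := volume.restrict (Ioi 0)) (x₀ := x₀) (Metric.ball_mem_nhds x₀ one_pos)
      (Eventually.of_forall fun x =>
        (phiInt_contOn p a m x).aestronglyMeasurable measurableSet_Ioi)
      (phiInt_integrableOn p a m x₀ hp)
      (phiD_meas p a m x₀)
      ?_ (gammaAux (p+1) (by linarith) _) ?_
  · exact key.2
  · filter_upwards [ae_restrict_mem measurableSet_Ioi] with t ht
    intro x hx
    exact deriv_norm_bound p a m x₀ ht hx
  · filter_upwards [ae_restrict_mem measurableSet_Ioi] with t ht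
    intro x hx
    unfold phiInt
    have h2 : HasDerivAt (fun x : ℝ => a * t * (x - m)) (a * t) x := by
      simpa using HasDerivAt.const_mul (a * t) ((hasDerivAt_id x).sub_const m)
    have h1 : HasDerivAt (fun x : ℝ => -t ^ 2 / 2 - a * t * (x - m)) (-(a * t)) x := by
      exact h2.const_sub _
    have h3 := HasDerivAt.const_mul (t ^ p) h1.exp
    convert h3 using 1
    all_goals first | ring | rfl

lemma phiD_continuous (p a m : ℝ) (hp : -1 < p) : Continuous (fun x => phiD p a m x) := by
  rw [continuous_iff_continuousAt]
  intro x₀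
  apply continuousAt_of_dominated
    (bound := fun t => (|a| * Real.exp ((1 + |a| * (|x₀ - m| + 1)) ^ 2 / 2))
      * (t ^ (p+1) * Real.exp (-t)))
    (Eventually.of_forall fun x => phiD_meas p a m x)
  · filter_upwards [Metric.ball_mem_nhds x₀ one_pos] with x hx
    filter_upwards [ae_restrict_mem measurableSet_Ioi] with t ht
    exact deriv_norm_bound p a m x₀ ht hx
  · exact gammaAux (p+1) (by linarith) _
  · filter_upwards [ae_restrict_mem measurableSet_Ioi] with t ht
    apply Continuous.continuousAt
    unfold phiInt
    fun_prop

lemma phiF_convex (p a m : ℝ) (hp : -1 < p) : ConvexOn ℝ univ (fun x => phiF p a m x) := by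
  refine ⟨convex_univ, fun x _ y _ α β hα hβ hab => ?_⟩
  simp only [smul_eq_mul]
  have key : ∀ t ∈ Ioi (0:ℝ),
      phiInt p a m (α * x + β * y) t ≤ α * phiInt p a m x t + β * phiInt p a m y t := by
    intro t ht
    have ht' : (0:ℝ) < t := ht
    unfold phiInt
    have hE : -t ^ 2 / 2 - a * t * ((α * x + β * y) - m)
        = α * (-t ^ 2 / 2 - a * t * (x - m)) + β * (-t ^ 2 / 2 - a * t * (y - m)) := by
      have hb : β = 1 - α := by linarith
      subst hb; ring
    rw [hE]
    have hexp := convexOn_exp.2 (mem_univ (-t ^ 2 / 2 - a * t * (x - m)))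
      (mem_univ (-t ^ 2 / 2 - a * t * (y - m))) hα hβ hab
    simp only [smul_eq_mul] at hexp
    calc t ^ p * Real.exp (α * (-t ^ 2 / 2 - a * t * (x - m)) + β * (-t ^ 2 / 2 - a * t * (y - m)))
        ≤ t ^ p * (α * Real.exp (-t ^ 2 / 2 - a * t * (x - m))
            + β * Real.exp (-t ^ 2 / 2 - a * t * (y - m))) :=
          mul_le_mul_of_nonneg_left hexp (Real.rpow_nonneg ht'.le p)
      _ = α * (t ^ p * Real.exp (-t ^ 2 / 2 - a * t * (x - m)))
            + β * (t ^ p * Real.exp (-t ^ 2 / 2 - a * t * (y - m))) := by ring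
  have h1 := phiInt_integrableOn p a m (α * x + β * y) hp
  have h2 := (phiInt_integrableOn p a m x hp).const_mul α
  have h3 := (phiInt_integrableOn p a m y hp).const_mul β
  calc phiF p a m (α * x + β * y)
      ≤ ∫ t in Ioi (0:ℝ), (α * phiInt p a m x t + β * phiInt p a m y t) :=
        setIntegral_mono_on h1 (h2.add h3) measurableSet_Ioi key
    _ = α * phiF p a m x + β * phiF p a m y := by
        rw [integral_add h2 h3, integral_const_mul, integral_const_mul]
        rfl


/-- fix `c ∈ [0,1]` with `k(c) > 0` and let `β` be the unique zero of
`H(·;c)`, with `β < x₀(c)`. Then `u(·;c)` is `C¹` on `ℝ` (in particular value matching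
`u(β;c) = 0` and smooth fit `u'(β;c) = 0` hold), is convex on `ℝ` and is nonnegative. -/
theorem statement8 (lam th mu sig : ℝ)
    (hlam : 0 < lam) (hth : 0 < th) (hmu : 0 < mu) (hsig : 0 < sig)
    (Phi : ℝ → ℝ) (hPhiC2 : ContDiff ℝ 2 Phi)
    (hPhiconv : StrictConvexOn ℝ Set.univ Phi)
    (hPhi' : ∀ c ∈ Set.Icc (0:ℝ) 1, deriv Phi c < 0) (hPhi1 : Phi 1 = 0)
    (c : ℝ) (hc : c ∈ Set.Icc (0:ℝ) 1) (hk : 0 < kfun lam th Phi c)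
    (beta : ℝ)
    (hbeta0 : Hfun lam th mu sig Phi beta c = 0)
    (hbetau : ∀ y : ℝ, Hfun lam th mu sig Phi y c = 0 → y = beta)
    (hbetax0 : beta < x0fun lam th mu Phi c) :
    ContDiff ℝ 1 (fun x => ufun lam th mu sig Phi beta x c) ∧
    ufun lam th mu sig Phi beta beta c = 0 ∧
    deriv (fun x => ufun lam th mu sig Phi beta x c) beta = 0 ∧
    ConvexOn ℝ Set.univ (fun x => ufun lam th mu sig Phi beta x c) ∧
    (∀ x : ℝ, 0 ≤ ufun lam th mu sig Phi beta x c) := by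
  have hlt : (0:ℝ) < lam + th := by linarith
  have hp : -1 < lam / th - 1 := by
    have := div_pos hlam hth; linarith
  have hOU : OUphi lam th mu sig = fun x => phiF (lam / th - 1) (Real.sqrt (2 * th) / sig) mu x :=
    rfl
  set p := lam / th - 1
  set a := Real.sqrt (2 * th) / sig
  -- basic facts about φ
  have hφpos : ∀ x, 0 < OUphi lam th mu sig x := by
    intro x; rw [hOU]; exact phiF_pos p a mu x hp
  have hφd : ∀ x, HasDerivAt (OUphi lam th mu sig) (phiD p a mu x) x := by
    intro x; rw [hOU]; exact phiF_hasDerivAt p a mu hp x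
  have hderiv_eq : deriv (OUphi lam th mu sig) = fun x => phiD p a mu x :=
    funext fun x => (hφd x).deriv
  have hφdd : ∀ x, HasDerivAt (OUphi lam th mu sig) (deriv (OUphi lam th mu sig) x) x := by
    intro x; rw [hderiv_eq]; exact hφd x
  have hφ'cont : Continuous (deriv (OUphi lam th mu sig)) := by
    rw [hderiv_eq]; exact phiD_continuous p a mu hp
  have hφconv : ConvexOn ℝ univ (OUphi lam th mu sig) := by
    rw [hOU]; exact phiF_convex p a mu hp
  -- abbreviations
  set K := kfun lam th Phi c with hK
  set C := Gfun lam th mu Phi beta c / OUphi lam th mu sig beta with hC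
  set v : ℝ → ℝ := fun x =>
    Gfun lam th mu Phi x c - C * OUphi lam th mu sig x with hv
  have huv : (fun x => ufun lam th mu sig Phi beta x c)
      = fun x => if beta < x then v x else 0 := rfl
  have hφβ : OUphi lam th mu sig beta ≠ 0 := (hφpos beta).ne'
  -- G facts
  have hGder : ∀ x, HasDerivAt (fun y => Gfun lam th mu Phi y c) (K / (lam + th)) x := by
    intro x
    have h1 : HasDerivAt (fun y : ℝ => mu * (K - th) / lam + K * (y - mu) / (lam + th))
        (0 + K * 1 / (lam + th)) x :=
      (hasDerivAt_const x _).add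
        ((HasDerivAt.const_mul K ((hasDerivAt_id x).sub_const mu)).div_const (lam + th))
    simpa [Gfun, ← hK] using h1
  have hGx0 : Gfun lam th mu Phi (x0fun lam th mu Phi c) c = 0 := by
    unfold Gfun x0fun
    rw [← hK]
    field_simp
    unfold K
    unfold kfun
    ring
  have hGβneg : Gfun lam th mu Phi beta c < 0 := by
    have hdiff : Gfun lam th mu Phi beta c - Gfun lam th mu Phi (x0fun lam th mu Phi c) c
        = K * (beta - x0fun lam th mu Phi c) / (lam + th) := by
      unfold Gfun; rw [← hK]; ring
    have h2 : K * (beta - x0fun lam th mu Phi c) / (lam + th) < 0 :=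
      div_neg_of_neg_of_pos (mul_neg_of_pos_of_neg hk (by linarith)) hlt
    rw [hGx0] at hdiff
    linarith [hdiff]
  have hCneg : C < 0 := div_neg_of_neg_of_pos hGβneg (hφpos beta)
  -- derivative of v
  set dvf : ℝ → ℝ := fun x => K / (lam + th) - C * deriv (OUphi lam th mu sig) x with hdvf
  have hvder : ∀ x, HasDerivAt v (dvf x) x := by
    intro x
    exact (hGder x).sub (HasDerivAt.const_mul C (hφdd x))
  have hdvb : dvf beta = 0 := by
    have h := hbeta0
    unfold Hfun at h
    rw [← hK] at h
    have h2 : Gfun lam th mu Phi beta c * deriv (OUphi lam th mu sig) beta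
        = K / (lam + th) * OUphi lam th mu sig beta := by linarith
    show K / (lam + th) - C * deriv (OUphi lam th mu sig) beta = 0
    rw [hC, div_mul_eq_mul_div, h2, mul_div_assoc, div_self hφβ, mul_one, sub_self]
  have hvbeta : v beta = 0 := by
    rw [hv, hC]
    field_simp
    ring
  -- convexity of v
  have hvconv : ConvexOn ℝ univ v := by
    refine ⟨convex_univ, fun x _ y _ α β' hα hβ hab => ?_⟩
    simp only [smul_eq_mul]
    have hphi := hφconv.2 (mem_univ x) (mem_univ y) hα hβ hab
    simp only [smul_eq_mul] at hphi
    have hG : Gfun lam th mu Phi (α * x + β' * y) c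
        = α * Gfun lam th mu Phi x c + β' * Gfun lam th mu Phi y c := by
      unfold Gfun
      have hb : β' = 1 - α := by linarith
      subst hb; ring
    have hmul := mul_le_mul_of_nonneg_left hphi (neg_nonneg.2 hCneg.le)
    simp only [hv]
    rw [hG]
    nlinarith [hmul]
  -- slope facts
  have hslope_tendsto : Tendsto (slope v beta) (𝓝[≠] beta) (𝓝 0) := by
    have h := hasDerivAt_iff_tendsto_slope.mp (hvder beta)
    rwa [hdvb] at h
  have hsec : ∀ s r : ℝ, s ≠ beta → r ≠ beta → s ≤ r →
      (v s - v beta) / (s - beta) ≤ (v r - v beta) / (r - beta) := by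
    intro s r hs hr hsr
    exact hvconv.secant_mono (mem_univ beta) (mem_univ s) (mem_univ r) hs hr hsr
  have hL : 𝓝[<] beta ≤ 𝓝[≠] beta :=
    nhdsWithin_mono beta fun s (hs : s < beta) => ne_of_lt hs
  have hR : 𝓝[>] beta ≤ 𝓝[≠] beta :=
    nhdsWithin_mono beta fun s (hs : beta < s) => ne_of_gt hs
  have hvnn : ∀ y, 0 ≤ v y := by
    intro y
    rcases lt_trichotomy y beta with hy | hy | hy
    · have hle : (v y - v beta) / (y - beta) ≤ 0 := by
        refine ge_of_tendsto (hslope_tendsto.mono_left hL) ?_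
        · filter_upwards [Ioo_mem_nhdsLT_of_mem (show beta ∈ Ioc y beta from ⟨hy, le_refl _⟩)]
            with s hs
          rw [slope_def_field]
          exact hsec y s (ne_of_lt hy) (ne_of_lt hs.2) hs.1.le
      rw [hvbeta, sub_zero] at hle
      rcases div_nonpos_iff.1 hle with ⟨h1, _⟩ | ⟨_, h2⟩
      · exact h1
      · linarith
    · rw [hy, hvbeta]
    · have hle : 0 ≤ (v y - v beta) / (y - beta) := by
        refine le_of_tendsto (hslope_tendsto.mono_left hR) ?_
        · filter_upwards [Ioo_mem_nhdsGT_of_mem (show beta ∈ Ico beta y from ⟨le_refl _, hy⟩)]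
            with s hs
          rw [slope_def_field]
          exact hsec s y (ne_of_gt hs.1) (ne_of_gt hy) hs.2.le
      rw [hvbeta, sub_zero] at hle
      rcases div_nonneg_iff.1 hle with ⟨h1, _⟩ | ⟨_, h2⟩
      · exact h1
      · linarith
  -- monotonicity of v on Ici beta
  have hmono : MonotoneOn v (Ici beta) := by
    intro s hs t ht hst
    rcases eq_or_lt_of_le (mem_Ici.1 hs) with hbs | hbs
    · rw [← hbs, hvbeta]; exact hvnn t
    rcases eq_or_lt_of_le hst with h | h
    · rw [h]
    have h1 := hsec s t (ne_of_gt hbs) (ne_of_gt (lt_trans hbs h)) hst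
    rw [hvbeta, sub_zero, sub_zero,
      div_le_div_iff₀ (by linarith) (by linarith)] at h1
    nlinarith [hvnn s, mul_nonneg (hvnn s) (sub_nonneg.2 hst)]
  -- derivative of u everywhere
  have hud : ∀ x, HasDerivAt (fun y => if beta < y then v y else 0) (dvf (max x beta)) x := by
    intro x
    rcases lt_trichotomy beta x with hx | hx | hx
    · have hev : (fun y => if beta < y then v y else 0) =ᶠ[𝓝 x] v := by
        filter_upwards [Ioi_mem_nhds hx] with y hy
        rw [if_pos (mem_Ioi.1 hy)]
      rw [max_eq_left hx.le]
      exact (hvder x).congr_of_eventuallyEq hev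
    · subst hx
      rw [max_self, hdvb]
      rw [hasDerivAt_iff_tendsto_slope, ← nhdsLT_sup_nhdsGT beta, tendsto_sup]
      constructor
      · apply Tendsto.congr' _ (tendsto_const_nhds (α := ℝ) (f := 𝓝[<] beta))
        filter_upwards [self_mem_nhdsWithin] with s hs
        rw [slope_def_field, if_neg (not_lt.2 (le_of_lt (mem_Iio.1 hs))),
          if_neg (lt_irrefl beta)]
        simp
      · apply Tendsto.congr' _ (hslope_tendsto.mono_left hR)
        filter_upwards [self_mem_nhdsWithin] with s hs
        rw [slope_def_field, slope_def_field, if_pos (mem_Ioi.1 hs), if_neg (lt_irrefl beta),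
          hvbeta]
    · have hev : (fun y => if beta < y then v y else 0) =ᶠ[𝓝 x] fun _ => (0:ℝ) := by
        filter_upwards [Iio_mem_nhds hx] with y hy
        rw [if_neg (not_lt.2 (le_of_lt (mem_Iio.1 hy)))]
      rw [max_eq_right hx.le, hdvb]
      exact (hasDerivAt_const x 0).congr_of_eventuallyEq hev
  have hderivu : deriv (fun y => if beta < y then v y else 0) = fun x => dvf (max x beta) :=
    funext fun x => (hud x).deriv
  have hwcont : Continuous fun x => dvf (max x beta) := by
    have h1 : Continuous dvf := continuous_const.sub (continuous_const.mul hφ'cont)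
    exact h1.comp (continuous_id.max continuous_const)
  refine ⟨?_, ?_, ?_, ?_, ?_⟩
  · rw [huv, contDiff_one_iff_deriv]
    exact ⟨fun x => (hud x).differentiableAt, hderivu ▸ hwcont⟩
  · show (if beta < beta then _ else (0:ℝ)) = 0
    rw [if_neg (lt_irrefl beta)]
  · rw [huv, hderivu]
    show dvf (max beta beta) = 0
    rw [max_self]
    exact hdvb
  · rw [huv]
    have himg : (fun x : ℝ => max x beta) '' univ = Ici beta := by
      rw [image_univ]
      ext y
      constructor
      · rintro ⟨x, rfl⟩; exact le_max_right x beta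
      · intro hy; exact ⟨y, max_eq_left hy⟩
    have hmaxconv : ConvexOn ℝ univ (fun x : ℝ => max x beta) := by
      simpa [Pi.sup_def] using
        (convexOn_id convex_univ).sup (convexOn_const beta (convex_univ (𝕜 := ℝ) (E := ℝ)))
    have hcomp : ConvexOn ℝ univ (v ∘ fun x : ℝ => max x beta) := by
      refine ConvexOn.comp ?_ hmaxconv ?_
      · rw [himg]; exact hvconv.subset (subset_univ _) (convex_Ici beta)
      · rw [himg]; exact hmono
    have hueq : (fun x => if beta < x then v x else 0) = v ∘ fun x : ℝ => max x beta := by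
      funext x
      by_cases h : beta < x
      · rw [if_pos h]; simp [Function.comp, max_eq_left h.le]
      · rw [if_neg h]
        simp [Function.comp, max_eq_right (not_lt.1 h), hvbeta]
    rw [hueq]
    exact hcomp
  · intro x
    show (0:ℝ) ≤ if beta < x then v x else 0
    by_cases h : beta < x
    · rw [if_pos h]; exact hvnn x
    · rw [if_neg h]
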